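/- (Non-concentration, regular case.) Let c : [0,H] → ℝ be twice continuously differentiable with c_m ≤ c(y) ≤ c_M for all y, and fix 0 < ε < Λ and a nonempty open interval (a,b) ⊆ (0,H). Then there exist μ₀ > 0 and d > 0 such that for every μ ≥ μ₀, every λ with (c_M + ε)μ² ≤ λ ≤ (c_M + Λ)μ², and every normalized Dirichlet solution u of the reduced problem with parameters (μ,λ), one has ∫_a^b u(y)² dy ≥ d. -/

import Mathlib

open MeasureTheory Set Filter Topology

noncomputable section

/-- `u` (with flux `v = c·u'` and weak derivative `g = u'`) is a solution of the reduced
problem `(c u')' + (λ - c μ²) u = 0` on the interval `[a, b]`: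
`u` is absolutely continuous with derivative `g ∈ L²`, the flux `v` agrees a.e. with `c·g`,
and `v` is absolutely continuous with derivative `(c μ² - λ)·u`. -/
def IsReducedSolutionOn (a b : ℝ) (c : ℝ → ℝ) (μ lam : ℝ) (u v g : ℝ → ℝ) : Prop :=
  IntervalIntegrable g volume a b ∧
  IntervalIntegrable (fun t => g t ^ 2) volume a b ∧
  (∀ y ∈ Set.Icc a b, u y = u a + ∫ t in a..y, g t) ∧
  (∀ᵐ y ∂volume.restrict (Set.Ioo a b), v y = c y * g y) ∧
  IntervalIntegrable (fun t => (c t * μ ^ 2 - lam) * u t) volume a b ∧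
  (∀ y ∈ Set.Icc a b, v y = v a + ∫ t in a..y, (c t * μ ^ 2 - lam) * u t)

/-- A coefficient on `[0, H]`: measurable and bounded between `cm` and `cM`. -/
def IsCoeff (H cm cM : ℝ) (c : ℝ → ℝ) : Prop :=
  Measurable c ∧ ∀ y ∈ Set.Icc (0 : ℝ) H, cm ≤ c y ∧ c y ≤ cM

set_option maxHeartbeats 2000000

/-- non-concentration in the regular case `c ∈ C²([0,H])`. -/
theorem stmt5 (cm cM H : ℝ) (hcm : 0 < cm) (hcmM : cm < cM) (hH : 0 < H)
    (c : ℝ → ℝ) (hc2 : ContDiffOn ℝ 2 c (Set.Icc 0 H))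
    (hbound : ∀ y ∈ Set.Icc (0 : ℝ) H, cm ≤ c y ∧ c y ≤ cM)
    (ε Λ : ℝ) (hε : 0 < ε) (hεΛ : ε < Λ)
    (a b : ℝ) (ha : 0 ≤ a) (hab : a < b) (hb : b ≤ H) :
    ∃ μ₀ > (0:ℝ), ∃ d > (0:ℝ),
      ∀ μ : ℝ, μ₀ ≤ μ →
      ∀ lam : ℝ, (cM + ε) * μ ^ 2 ≤ lam → lam ≤ (cM + Λ) * μ ^ 2 →
      ∀ u v g : ℝ → ℝ, IsReducedSolutionOn 0 H c μ lam u v g →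
      u 0 = 0 → u H = 0 → (∫ y in (0:ℝ)..H, u y ^ 2) = 1 →
      d ≤ ∫ y in a..b, u y ^ 2 := by
  have hccont : ContinuousOn c (Set.Icc 0 H) := hc2.continuousOn
  set c' : ℝ → ℝ := derivWithin c (Set.Icc 0 H) with hc'def
  have hc'cont : ContinuousOn c' (Set.Icc 0 H) :=
    hc2.continuousOn_derivWithin (uniqueDiffOn_Icc hH) (by norm_num)
  obtain ⟨K, hK⟩ : ∃ K, ∀ y ∈ Set.Icc (0:ℝ) H, |c' y| ≤ K := by
    obtain ⟨K, hK⟩ := (isCompact_Icc.image_of_continuousOn hc'cont.abs).bddAbove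
    exact ⟨K, fun y hy => hK ⟨y, hy, rfl⟩⟩
  have hcd : ∀ y ∈ Set.Ioo (0:ℝ) H, HasDerivAt c (c' y) y := by
    intro y hy
    have hmem : Set.Icc (0:ℝ) H ∈ 𝓝 y := Icc_mem_nhds hy.1 hy.2
    exact ((hc2.differentiableOn (by norm_num) y
      (Set.Ioo_subset_Icc_self hy)).hasDerivWithinAt).hasDerivAt hmem
  have hc0 : ∀ y ∈ Set.Icc (0:ℝ) H, (0:ℝ) < c y := fun y hy => lt_of_lt_of_le hcm (hbound y hy).1
  have hcne : ∀ y ∈ Set.Icc (0:ℝ) H, c y ≠ 0 := fun y hy => (hc0 y hy).ne'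
  have hlow : ∀ y ∈ Set.Icc (0:ℝ) H, cm ≤ c y := fun y hy => (hbound y hy).1
  have hK0 : 0 ≤ K := le_trans (abs_nonneg _) (hK 0 ⟨le_rfl, hH.le⟩)
  set C : ℝ := K * (1/cm + 1/ε) with hCdef
  have hC0 : 0 ≤ C := by positivity
  have hba0 : (0:ℝ) < b - a := by linarith
  have hQ : (0:ℝ) < cM + Λ - cm := by linarith
  refine ⟨max 1 (4 * ((1/ε + cM)/2) * Real.exp (C * H) / (b - a)),
    lt_of_lt_of_le one_pos (le_max_left _ _),
    (b - a) * ε / (4 * H * (cM + Λ - cm) * Real.exp (C * H)),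
    div_pos (mul_pos hba0 hε)
      (mul_pos (mul_pos (mul_pos (by norm_num) hH) hQ) (Real.exp_pos _)), ?_⟩
  intro μ hμmax lam hlam1 hlam2 u v g hsol hu0 huH hnorm
  obtain ⟨hg1, hg2, hu, hvg, hint, hv⟩ := hsol
  have hμ1 : (1:ℝ) ≤ μ := le_trans (le_max_left _ _) hμmax
  have hμ0 : (0:ℝ) < μ := lt_of_lt_of_le one_pos hμ1
  have hμbig : 4 * ((1/ε + cM)/2) * Real.exp (C * H) / (b - a) ≤ μ :=
    le_trans (le_max_right _ _) hμmax
  have hq1 : ∀ y ∈ Set.Icc (0:ℝ) H, ε * μ ^ 2 ≤ lam - c y * μ ^ 2 := by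
    intro y hy
    nlinarith [mul_nonneg (sub_nonneg.mpr (hbound y hy).2) (sq_nonneg μ)]
  have hq2 : ∀ y ∈ Set.Icc (0:ℝ) H, lam - c y * μ ^ 2 ≤ (cM + Λ - cm) * μ ^ 2 := by
    intro y hy
    nlinarith [mul_nonneg (sub_nonneg.mpr (hbound y hy).1) (sq_nonneg μ)]
  have hvcont : ContinuousOn v (Set.Icc 0 H) := by
    have h1 : ContinuousOn (fun y => v 0 + ∫ t in (0:ℝ)..y, (c t * μ ^ 2 - lam) * u t)
        (Set.Icc 0 H) := by
      apply ContinuousOn.add continuousOn_const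
      have := intervalIntegral.continuousOn_primitive_interval'
        (μ := volume) (b₁ := (0:ℝ)) (b₂ := H) hint Set.left_mem_uIcc
      rwa [Set.uIcc_of_le hH.le] at this
    exact h1.congr hv
  -- v/c is continuous on Icc 0 H
  have hvc : ContinuousOn (fun t => v t / c t) (Set.Icc 0 H) := hvcont.div hccont hcne
  -- a.e. g = v / c on Ioo 0 H; transfer integral
  have hgvc : ∀ y ∈ Set.Icc (0:ℝ) H, (∫ t in (0:ℝ)..y, g t) = ∫ t in (0:ℝ)..y, v t / c t := by
    intro y hy
    apply intervalIntegral.integral_congr_ae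
    have h2 : ∀ᵐ x : ℝ, x ∈ Set.Ioo (0:ℝ) H → v x = c x * g x :=
      (ae_restrict_iff' measurableSet_Ioo).mp hvg
    have h3 : ∀ᵐ x : ℝ, x ≠ H := by
      refine (MeasureTheory.measure_eq_zero_iff_ae_notMem.mp (measure_singleton H)).mono ?_
      intro x hx; simpa using hx
    filter_upwards [h2, h3] with x h2x h3x hx
    rw [Set.uIoc_of_le hy.1] at hx
    have hxI : x ∈ Set.Ioo (0:ℝ) H := ⟨hx.1, lt_of_le_of_ne (hx.2.trans hy.2) h3x⟩
    rw [h2x hxI, mul_comm, mul_div_assoc,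
      div_self (hcne x (Set.Ioo_subset_Icc_self hxI)), mul_one]
  have hu' : ∀ y ∈ Set.Icc (0:ℝ) H, u y = ∫ t in (0:ℝ)..y, v t / c t := by
    intro y hy; rw [hu y hy, hu0, zero_add, hgvc y hy]
  have hucont : ContinuousOn u (Set.Icc 0 H) := by
    have h1 := intervalIntegral.continuousOn_primitive_interval'
      (μ := volume) (f := fun t => v t / c t) (b₁ := (0:ℝ)) (b₂ := H)
      ((by rw [Set.uIcc_of_le hH.le]; exact hvc : ContinuousOn _ (Set.uIcc (0:ℝ) H)).intervalIntegrable) Set.left_mem_uIcc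
    rw [Set.uIcc_of_le hH.le] at h1
    exact h1.congr hu'
  -- derivatives at interior points
  have huder : ∀ y ∈ Set.Ioo (0:ℝ) H, HasDerivAt u (v y / c y) y := by
    intro y hy
    have hmem : Set.Icc (0:ℝ) H ∈ 𝓝 y := Icc_mem_nhds hy.1 hy.2
    have hci : IntervalIntegrable (fun t => v t / c t) volume 0 y := by
      apply ContinuousOn.intervalIntegrable
      rw [Set.uIcc_of_le hy.1.le]
      exact hvc.mono (Set.Icc_subset_Icc le_rfl hy.2.le)
    have hca : ContinuousAt (fun t => v t / c t) y :=
      hvc.continuousAt hmem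
    have hd := intervalIntegral.integral_hasDerivAt_right hci
      (ContinuousOn.stronglyMeasurableAtFilter isOpen_Ioo (hvc.mono Set.Ioo_subset_Icc_self) y hy) hca
    apply hd.congr_of_eventuallyEq
    filter_upwards [hmem] with x hx
    exact (hu' x hx)
  have hvder : ∀ y ∈ Set.Ioo (0:ℝ) H, HasDerivAt v ((c y * μ ^ 2 - lam) * u y) y := by
    intro y hy
    have hmem : Set.Icc (0:ℝ) H ∈ 𝓝 y := Icc_mem_nhds hy.1 hy.2
    have hfc : ContinuousOn (fun t => (c t * μ ^ 2 - lam) * u t) (Set.Icc 0 H) :=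
      ((hccont.mul continuousOn_const).sub continuousOn_const).mul hucont
    have hci : IntervalIntegrable (fun t => (c t * μ ^ 2 - lam) * u t) volume 0 y := by
      apply ContinuousOn.intervalIntegrable
      rw [Set.uIcc_of_le hy.1.le]
      exact hfc.mono (Set.Icc_subset_Icc le_rfl hy.2.le)
    have hca : ContinuousAt (fun t => (c t * μ ^ 2 - lam) * u t) y := hfc.continuousAt hmem
    have hd := intervalIntegral.integral_hasDerivAt_right hci
      (ContinuousOn.stronglyMeasurableAtFilter isOpen_Ioo (hfc.mono Set.Ioo_subset_Icc_self) y hy) hca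
    have hd2 : HasDerivAt (fun x => v 0 + ∫ t in (0:ℝ)..x, (c t * μ ^ 2 - lam) * u t)
        ((c y * μ ^ 2 - lam) * u y) y := (hd.const_add (v 0))
    apply hd2.congr_of_eventuallyEq
    filter_upwards [hmem] with x hx
    exact hv x hx
  set E : ℝ → ℝ := fun y => v y ^ 2 / c y + (lam - c y * μ ^ 2) * u y ^ 2 with hEdef
  have hEcont : ContinuousOn E (Set.Icc 0 H) := by
    apply ContinuousOn.add
    · exact (hvcont.pow 2).div hccont (fun y hy => (hc0 y hy).ne')
    · exact (continuousOn_const.sub (hccont.mul continuousOn_const)).mul (hucont.pow 2)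
  have hE0 : ∀ y ∈ Set.Icc (0:ℝ) H, 0 ≤ E y := by
    intro y hy
    have h1 : 0 ≤ v y ^ 2 / c y := div_nonneg (sq_nonneg _) (hc0 y hy).le
    have h2 : 0 ≤ lam - c y * μ ^ 2 := le_trans (by positivity) (hq1 y hy)
    positivity
  -- derivative of E
  have hEder : ∀ y ∈ Set.Ioo (0:ℝ) H,
      HasDerivAt E (-(c' y) * ((v y / c y) ^ 2 + μ ^ 2 * u y ^ 2)) y := by
    intro y hy
    have hyI := Set.Ioo_subset_Icc_self hy
    have hcy := hc0 y hyI
    have h1 : HasDerivAt (fun t => v t ^ 2 / c t)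
        (((2 * v y * ((c y * μ ^ 2 - lam) * u y)) * c y - v y ^ 2 * c' y) / c y ^ 2) y := by
      exact HasDerivAt.div (by simpa [mul_comm] using (hvder y hy).fun_pow 2) (hcd y hy) hcy.ne'
    have h2 : HasDerivAt (fun t => (lam - c t * μ ^ 2) * u t ^ 2)
        ((-(c' y) * μ ^ 2) * u y ^ 2 + (lam - c y * μ ^ 2) * (2 * u y * (v y / c y))) y := by
      apply HasDerivAt.mul
      · simpa using ((hcd y hy).mul_const (μ^2)).const_sub lam
      · simpa [mul_comm] using (huder y hy).fun_pow 2
    have := h1.fun_add h2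
    refine this.congr_deriv ?_
    field_simp
    ring
  -- bound |E'| ≤ C E
  have hEbnd : ∀ y ∈ Set.Ioo (0:ℝ) H,
      |(-(c' y) * ((v y / c y) ^ 2 + μ ^ 2 * u y ^ 2))| ≤ C * E y := by
    intro y hy
    have hyI := Set.Ioo_subset_Icc_self hy
    have hcy := hc0 y hyI
    have hq := hq1 y hyI
    have h1 : (v y / c y) ^ 2 ≤ E y / cm := by
      rw [div_pow]
      have hv2 : v y ^ 2 / c y ≤ E y := by
        have : 0 ≤ (lam - c y * μ ^ 2) * u y ^ 2 :=
          mul_nonneg (le_trans (by positivity) hq) (sq_nonneg _)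
        simp only [hEdef]; linarith
      have hE0y : 0 ≤ E y := le_trans (div_nonneg (sq_nonneg _) hcy.le) hv2
      calc v y ^ 2 / c y ^ 2 = (v y ^ 2 / c y) / c y := by ring
        _ ≤ E y / c y := by gcongr
        _ ≤ E y / cm := by gcongr; exact (hbound y hyI).1
    have h2 : μ ^ 2 * u y ^ 2 ≤ E y / ε := by
      have hqu : ε * (μ ^ 2 * u y ^ 2) ≤ E y := by
        have h3 : ε * μ ^ 2 * u y ^ 2 ≤ (lam - c y * μ ^ 2) * u y ^ 2 :=
          mul_le_mul_of_nonneg_right hq (sq_nonneg _)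
        have h4 : 0 ≤ v y ^ 2 / c y := div_nonneg (sq_nonneg _) hcy.le
        simp only [hEdef]; nlinarith
      rw [le_div_iff₀ hε] at *
      linarith [hqu]
    have hE0y : 0 ≤ E y := hE0 y hyI
    have habs : |(-(c' y) * ((v y / c y) ^ 2 + μ ^ 2 * u y ^ 2))|
        = |c' y| * ((v y / c y) ^ 2 + μ ^ 2 * u y ^ 2) := by
      rw [abs_mul, abs_neg]
      congr 1
      exact abs_of_nonneg (by positivity)
    rw [habs]
    have hKy := hK y hyI
    calc |c' y| * ((v y / c y) ^ 2 + μ ^ 2 * u y ^ 2)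
        ≤ K * (E y / cm + E y / ε) := by
          apply mul_le_mul hKy (by linarith) (by positivity) hK0
      _ = C * E y := by rw [hCdef]; field_simp
  -- Gronwall comparability
  set D' : ℝ → ℝ := fun y => -(c' y) * ((v y / c y) ^ 2 + μ ^ 2 * u y ^ 2) with hD'def
  have hkey : ∀ y ∈ Set.Icc (0:ℝ) H, ∀ z ∈ Set.Icc (0:ℝ) H,
      E y ≤ Real.exp (C * H) * E z := by
    have halg : ∀ A B p r : ℝ, 0 ≤ B → A * Real.exp p ≤ B * Real.exp r → r - p ≤ C * H →
        A ≤ Real.exp (C * H) * B := by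
      intro A B p r hB h hpr
      calc A = A * Real.exp p * Real.exp (-p) := by
              rw [mul_assoc, ← Real.exp_add, add_neg_cancel, Real.exp_zero, mul_one]
        _ ≤ B * Real.exp r * Real.exp (-p) := mul_le_mul_of_nonneg_right h (Real.exp_pos _).le
        _ = B * Real.exp (r - p) := by rw [mul_assoc, ← Real.exp_add]; ring_nf
        _ ≤ B * Real.exp (C * H) := mul_le_mul_of_nonneg_left (Real.exp_le_exp.mpr hpr) hB
        _ = Real.exp (C * H) * B := mul_comm _ _
    have hmono : MonotoneOn (fun y => E y * Real.exp (C * y)) (Set.Icc 0 H) := by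
      apply monotoneOn_of_hasDerivWithinAt_nonneg (convex_Icc 0 H)
        (f' := fun y => D' y * Real.exp (C * y) + E y * (Real.exp (C * y) * C))
      · exact hEcont.mul ((Real.continuous_exp.comp (continuous_const.mul continuous_id)).continuousOn)
      · intro x hx
        rw [interior_Icc] at hx
        have := ((hEder x hx).fun_mul (((hasDerivAt_id x).const_mul C).exp)).hasDerivWithinAt
          (s := interior (Set.Icc (0:ℝ) H))
        simp only [id_eq, mul_one] at this
        convert this using 1
      · intro x hx
        rw [interior_Icc] at hx
        have h1 := hEbnd x hx
        have h2 : -(C * E x) ≤ D' x := (abs_le.mp h1).1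
        have h3 : (0:ℝ) < Real.exp (C * x) := Real.exp_pos _
        nlinarith
    have hanti : AntitoneOn (fun y => E y * Real.exp (-C * y)) (Set.Icc 0 H) := by
      apply antitoneOn_of_hasDerivWithinAt_nonpos (convex_Icc 0 H)
        (f' := fun y => D' y * Real.exp (-C * y) + E y * (Real.exp (-C * y) * (-C)))
      · exact hEcont.mul ((Real.continuous_exp.comp (continuous_const.mul continuous_id)).continuousOn)
      · intro x hx
        rw [interior_Icc] at hx
        have := ((hEder x hx).fun_mul (((hasDerivAt_id x).const_mul (-C)).exp)).hasDerivWithinAt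
          (s := interior (Set.Icc (0:ℝ) H))
        simp only [id_eq, mul_one] at this
        convert this using 1
      · intro x hx
        rw [interior_Icc] at hx
        have h1 := hEbnd x hx
        have h2 : D' x ≤ C * E x := (abs_le.mp h1).2
        have h3 : (0:ℝ) < Real.exp (-C * x) := Real.exp_pos _
        nlinarith
    intro y hy z hz
    have hEz : 0 ≤ E z := hE0 z hz
    rcases le_total y z with hyz | hzy
    · have h := hmono hy hz hyz
      simp only at h
      exact halg _ _ _ _ hEz h (by nlinarith [hy.1, hz.2])
    · have h := hanti hz hy hzy
      simp only at h
      exact halg _ _ _ _ hEz h (by nlinarith [hz.1, hy.2])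
  have hsub : Set.Icc a b ⊆ Set.Icc (0:ℝ) H := Set.Icc_subset_Icc ha hb
  set m' : ℝ := Real.exp (C * H) with hm'def
  have hm'1 : (1:ℝ) ≤ m' := Real.one_le_exp (by positivity)
  have hm'0 : (0:ℝ) < m' := lt_of_lt_of_le one_pos hm'1
  -- continuity of building blocks
  have hq : ContinuousOn (fun y => (lam - c y * μ ^ 2) * u y ^ 2) (Set.Icc 0 H) :=
    (continuousOn_const.sub (hccont.mul continuousOn_const)).mul (hucont.pow 2)
  have hvc2 : ContinuousOn (fun y => v y ^ 2 / c y) (Set.Icc 0 H) :=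
    (hvcont.pow 2).div hccont (fun y hy => (hc0 y hy).ne')
  have int_of : ∀ (f : ℝ → ℝ), ContinuousOn f (Set.Icc 0 H) → ∀ a' b' : ℝ, 0 ≤ a' → a' ≤ b' →
      b' ≤ H → IntervalIntegrable f volume a' b' := by
    intro f hf a' b' h1 h2 h3
    apply ContinuousOn.intervalIntegrable
    rw [Set.uIcc_of_le h2]
    exact hf.mono (Set.Icc_subset_Icc h1 h3)
  -- lower bound for E everywhere
  have hElow : ∀ z ∈ Set.Icc (0:ℝ) H, ε * μ ^ 2 / (H * m') ≤ E z := by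
    intro z hz
    have h1 : ε * μ ^ 2 ≤ ∫ y in (0:ℝ)..H, (lam - c y * μ ^ 2) * u y ^ 2 := by
      have := intervalIntegral.integral_mono_on hH.le
        (int_of _ ((continuousOn_const (c := ε * μ ^ 2)).mul (hucont.pow 2)) 0 H le_rfl hH.le le_rfl)
        (int_of _ hq 0 H le_rfl hH.le le_rfl)
        (fun y hy => mul_le_mul_of_nonneg_right (hq1 y hy) (sq_nonneg _))
      calc ε * μ ^ 2 = ∫ y in (0:ℝ)..H, ε * μ ^ 2 * u y ^ 2 := by
            rw [intervalIntegral.integral_const_mul, hnorm, mul_one]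
        _ ≤ _ := this
    have h2 : (∫ y in (0:ℝ)..H, (lam - c y * μ ^ 2) * u y ^ 2) ≤ H * (m' * E z) := by
      have hpt : ∀ y ∈ Set.Icc (0:ℝ) H, (lam - c y * μ ^ 2) * u y ^ 2 ≤ m' * E z := by
        intro y hy
        have h3 : (lam - c y * μ ^ 2) * u y ^ 2 ≤ E y := by
          rw [hEdef]
          have : 0 ≤ v y ^ 2 / c y := div_nonneg (sq_nonneg _) (hc0 y hy).le
          simp only []
          linarith
        exact h3.trans (hkey y hy z hz)
      calc (∫ y in (0:ℝ)..H, (lam - c y * μ ^ 2) * u y ^ 2)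
          ≤ ∫ _y in (0:ℝ)..H, m' * E z := intervalIntegral.integral_mono_on hH.le
            (int_of _ hq 0 H le_rfl hH.le le_rfl) intervalIntegrable_const hpt
        _ = H * (m' * E z) := by rw [intervalIntegral.integral_const, smul_eq_mul, sub_zero]
    rw [div_le_iff₀ (by positivity)]
    nlinarith
  -- FTC identity on [a,b]
  have hioo : Set.Ioo a b ⊆ Set.Ioo (0:ℝ) H := Set.Ioo_subset_Ioo ha hb
  have hparts : (∫ y in a..b, (v y ^ 2 / c y - (lam - c y * μ ^ 2) * u y ^ 2))
      = u b * v b - u a * v a := by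
    apply intervalIntegral.integral_eq_sub_of_hasDeriv_right_of_le hab.le
    · exact (hucont.mul hvcont).mono hsub
    · intro x hx
      have hxI := hioo hx
      have hder : HasDerivAt (fun y => u y * v y)
          (v x / c x * v x + u x * ((c x * μ ^ 2 - lam) * u x)) x :=
        (huder x hxI).mul (hvder x hxI)
      have heq : v x / c x * v x + u x * ((c x * μ ^ 2 - lam) * u x)
          = v x ^ 2 / c x - (lam - c x * μ ^ 2) * u x ^ 2 := by
        field_simp
        ring
      rw [heq] at hder
      exact hder.hasDerivWithinAt
    · exact int_of _ (hvc2.sub hq) a b ha hab.le hb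
  -- integral of E over [a,b]
  have hintq := int_of _ hq a b ha hab.le hb
  have hintvc := int_of _ hvc2 a b ha hab.le hb
  have hintE := int_of _ hEcont a b ha hab.le hb
  set Ia : ℝ := ∫ y in a..b, E y with hIadef
  have hsplit : Ia = 2 * (∫ y in a..b, (lam - c y * μ ^ 2) * u y ^ 2)
      + (u b * v b - u a * v a) := by
    have h1 : Ia = (∫ y in a..b, v y ^ 2 / c y) + ∫ y in a..b, (lam - c y * μ ^ 2) * u y ^ 2 := by
      rw [hIadef, hEdef, ← intervalIntegral.integral_add hintvc hintq]
    have h2 : (∫ y in a..b, v y ^ 2 / c y)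
        = (u b * v b - u a * v a) + ∫ y in a..b, (lam - c y * μ ^ 2) * u y ^ 2 := by
      rw [← hparts, ← intervalIntegral.integral_add (hintvc.sub hintq) hintq]
      congr 1; ext y; ring
    rw [h1, h2]; ring
  -- lower bound on Ia
  have hIalow : (b - a) * (ε * μ ^ 2 / (H * m')) ≤ Ia := by
    have h := intervalIntegral.integral_mono_on hab.le intervalIntegrable_const hintE
      (fun y hy => hElow y (hsub hy))
    rwa [intervalIntegral.integral_const, smul_eq_mul] at h
  -- Ea, Eb vs Ia
  have hEbd : ∀ z ∈ Set.Icc (0:ℝ) H, (b - a) * E z ≤ m' * Ia := by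
    intro z hz
    have h := intervalIntegral.integral_mono_on hab.le intervalIntegrable_const
      (hintE.const_mul m') (fun y hy => hkey z hz y (hsub hy))
    rwa [intervalIntegral.integral_const, smul_eq_mul,
      intervalIntegral.integral_const_mul] at h
  -- boundary terms
  set B : ℝ := (1/ε + cM)/2 with hBdef
  have hB0 : 0 < B := by
    rw [hBdef]
    have h1 : 0 < 1/ε := by positivity
    linarith
  have hbdry : ∀ z ∈ Set.Icc (0:ℝ) H, |u z * v z| * μ ≤ B * E z := by
    intro z hz
    have hcz := hc0 z hz
    have hq1z := hq1 z hz
    have hEz : v z ^ 2 / c z + (lam - c z * μ ^ 2) * u z ^ 2 = E z := by rw [hEdef]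
    have hu2 : ε * (μ ^ 2 * u z ^ 2) ≤ E z := by
      have h3 : ε * μ ^ 2 * u z ^ 2 ≤ (lam - c z * μ ^ 2) * u z ^ 2 :=
        mul_le_mul_of_nonneg_right hq1z (sq_nonneg _)
      have h4 : 0 ≤ v z ^ 2 / c z := div_nonneg (sq_nonneg _) hcz.le
      rw [← hEz]; linarith
    have hv2 : v z ^ 2 ≤ cM * E z := by
      have hqz0 : 0 ≤ (lam - c z * μ ^ 2) * u z ^ 2 :=
        mul_nonneg (le_trans (by positivity) hq1z) (sq_nonneg _)
      have h5 : v z ^ 2 / c z ≤ E z := by rw [← hEz]; linarith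
      have h6 : v z ^ 2 ≤ c z * E z := by
        rw [div_le_iff₀ hcz] at h5; linarith [h5]
      nlinarith [hE0 z hz, (hbound z hz).2]
    have habs : |u z * v z| * μ = |u z| * |v z| * μ := by rw [abs_mul]
    have h2 : B * E z = (1 + ε * cM) * E z / (2 * ε) := by
      rw [hBdef]; field_simp
    rw [habs, h2, le_div_iff₀ (by positivity : (0:ℝ) < 2 * ε)]
    have k1 : 2 * (μ * |u z|) * |v z| ≤ μ ^ 2 * u z ^ 2 + v z ^ 2 := by
      nlinarith [sq_nonneg (μ * |u z| - |v z|), sq_abs (u z), sq_abs (v z)]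
    have k2 := mul_le_mul_of_nonneg_left k1 hε.le
    have k3 := mul_le_mul_of_nonneg_left hv2 hε.le
    linarith [k2, k3, hu2]
  -- combine
  have hQint : (b - a) * (ε * μ ^ 2 / (H * m')) / 4 ≤ ∫ y in a..b, (lam - c y * μ ^ 2) * u y ^ 2 := by
    have hEa := hEbd a (hsub ⟨le_rfl, hab.le⟩)
    have hEb := hEbd b (hsub ⟨hab.le, le_rfl⟩)
    have hba := hbdry a (hsub ⟨le_rfl, hab.le⟩)
    have hbb := hbdry b (hsub ⟨hab.le, le_rfl⟩)
    have habs1 : u b * v b - u a * v a ≥ -(|u b * v b| + |u a * v a|) := by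
      have := abs_nonneg (u b * v b)
      have h1 := neg_abs_le (u b * v b)
      have h2 := neg_abs_le (u a * v a)
      have h3 := le_abs_self (u a * v a)
      linarith
    have hμb : 4 * B * m' / (b - a) ≤ μ := hμbig
    have hba0 : (0:ℝ) < b - a := by linarith
    have hbaμ : (0:ℝ) < (b - a) * μ := mul_pos hba0 hμ0
    have hIa0 : 0 ≤ Ia := le_trans (by positivity) hIalow
    -- |uv| at a,b ≤ B E/μ ≤ B m' Ia /((b-a) μ)
    have hba' : |u a * v a| ≤ B * m' * Ia / ((b - a) * μ) := by
      rw [le_div_iff₀ hbaμ]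
      have : (b-a) * (|u a * v a| * μ) ≤ (b-a) * (B * E a) :=
        mul_le_mul_of_nonneg_left hba hba0.le
      calc |u a * v a| * ((b-a) * μ) = (b-a) * (|u a * v a| * μ) := by ring
        _ ≤ (b-a) * (B * E a) := this
        _ = B * ((b-a) * E a) := by ring
        _ ≤ B * (m' * Ia) := mul_le_mul_of_nonneg_left hEa hB0.le
        _ = B * m' * Ia := by ring
    have hbb' : |u b * v b| ≤ B * m' * Ia / ((b - a) * μ) := by
      rw [le_div_iff₀ hbaμ]
      have : (b-a) * (|u b * v b| * μ) ≤ (b-a) * (B * E b) :=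
        mul_le_mul_of_nonneg_left hbb hba0.le
      calc |u b * v b| * ((b-a) * μ) = (b-a) * (|u b * v b| * μ) := by ring
        _ ≤ (b-a) * (B * E b) := this
        _ = B * ((b-a) * E b) := by ring
        _ ≤ B * (m' * Ia) := mul_le_mul_of_nonneg_left hEb hB0.le
        _ = B * m' * Ia := by ring
    have hsum : |u b * v b| + |u a * v a| ≤ Ia / 2 := by
      have h8 : 4 * B * m' ≤ (b - a) * μ := by
        rw [div_le_iff₀ hba0] at hμb
        linarith [hμb]
      have h7 : B * m' * Ia / ((b - a) * μ) ≤ Ia / 4 := by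
        rw [div_le_div_iff₀ hbaμ (by norm_num : (0:ℝ) < 4)]
        have h8' := mul_le_mul_of_nonneg_left h8 hIa0
        nlinarith [h8']
      linarith
    -- 2 ∫ qu² = Ia - (ubvb - uava) ≥ Ia - Ia/2 = Ia/2
    have h9 : Ia / 2 ≤ 2 * ∫ y in a..b, (lam - c y * μ ^ 2) * u y ^ 2 := by
      have habs2 : u b * v b - u a * v a ≤ |u b * v b| + |u a * v a| := by
        have h1 := le_abs_self (u b * v b)
        have h2 := neg_abs_le (u a * v a)
        linarith
      linarith [hsplit, hsum, habs2]
    linarith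
  -- final: qu² ≤ Q μ² u²
  have hfin : (∫ y in a..b, (lam - c y * μ ^ 2) * u y ^ 2)
      ≤ (cM + Λ - cm) * μ ^ 2 * ∫ y in a..b, u y ^ 2 := by
    rw [← intervalIntegral.integral_const_mul]
    exact intervalIntegral.integral_mono_on hab.le hintq
      (int_of _ (continuousOn_const.mul (hucont.pow 2)) a b ha hab.le hb)
      (fun y hy => mul_le_mul_of_nonneg_right (hq2 y (hsub hy)) (sq_nonneg _))
  have hμ2 : (0:ℝ) < μ ^ 2 := by positivity
  set J : ℝ := ∫ y in a..b, u y ^ 2 with hJdef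
  have h10 : (b - a) * (ε * μ ^ 2 / (H * m')) / 4 ≤ (cM + Λ - cm) * μ ^ 2 * J :=
    le_trans hQint hfin
  have h12 : (b - a) * ε * μ ^ 2 ≤ 4 * (H * m') * ((cM + Λ - cm) * μ ^ 2 * J) := by
    have h13 := mul_le_mul_of_nonneg_left h10 (by positivity : (0:ℝ) ≤ 4 * (H * m'))
    calc (b - a) * ε * μ ^ 2
        = 4 * (H * m') * ((b - a) * (ε * μ ^ 2 / (H * m')) / 4) := by
          field_simp
      _ ≤ _ := h13
  rw [div_le_iff₀ (by positivity)]
  nlinarith [h12, hμ2]
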